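/- arXiv:2007.09442 — 4 statements merged into one kernel-verified Lean document; each statement's English description precedes it below -/
import Mathlib

section
/- Let A be a C*-algebra, (X, Σ) a measurable space, and m a state-valued vector measure on (X, Σ): m maps measurable sets to continuous linear functionals on A, m(∅) = 0, m is countably additive in the dual norm, and for every measurable S and every a ∈ A with 0 ≤ a the value (m S)(a) is a nonnegative real number. Then the set function S ↦ ‖m(S)‖ (dual norm) is countably additive: ‖m(∅)‖ = 0 and for every sequence (Sₙ) of pairwise disjoint measurable sets the series Σₙ ‖m(Sₙ)‖ converges with sum ‖m(⋃ₙ Sₙ)‖; consequently there exists a finite measure m̂ on (X, Σ) with m̂(S) = ‖m(S)‖ for every measurable S. Moreover m is absolutely continuous with respect to m̂: if ‖m(S)‖ = 0 then m(S) = 0. -/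
open scoped Function

open Complex in
/-- A positive continuous linear functional on a unital C*-algebra attains its norm at `1`. -/
lemma posFunctional_norm_eq
    {A : Type*} [NormedRing A] [StarRing A] [CStarRing A]
    [NormedAlgebra ℂ A] [StarModule ℂ A] [PartialOrder A] [StarOrderedRing A]
    (φ : StrongDual ℂ A)
    (hφ : ∀ a : A, 0 ≤ a → ∃ r : ℝ, 0 ≤ r ∧ φ a = (r : ℂ))
    {p : ℝ} (hp0 : 0 ≤ p) (hp : φ 1 = (p : ℂ)) : ‖φ‖ = p := by
  -- φ is star-preserving
  have hstar : ∀ x : A, φ (star x) = starRingEnd ℂ (φ x) := by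
    intro x
    obtain ⟨q, hq0, hq⟩ := hφ _ (star_mul_self_nonneg x)
    obtain ⟨r1, hr10, h1⟩ := hφ _ (star_mul_self_nonneg (1 + x))
    obtain ⟨r2, hr20, h2⟩ := hφ _ (star_mul_self_nonneg (1 + Complex.I • x))
    have e1 : star (1 + x) * (1 + x) = 1 + x + star x + star x * x := by
      rw [star_add, star_one]; noncomm_ring
    have e2 : star (1 + Complex.I • x) * (1 + Complex.I • x)
        = 1 + Complex.I • x + (-Complex.I) • star x + star x * x := by
      rw [star_add, star_one, star_smul, Complex.star_def, Complex.conj_I]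
      rw [add_mul, one_mul, mul_add, mul_one, smul_mul_assoc, mul_smul_comm,
        smul_smul]
      simp [add_assoc]
    rw [e1] at h1
    rw [e2] at h2
    simp only [map_add, hp, hq, map_smul, smul_eq_mul] at h1 h2
    have i1 := congrArg Complex.im h1
    have i2 := congrArg Complex.im h2
    simp only [Complex.add_im, Complex.ofReal_im, Complex.mul_im, Complex.I_re,
      Complex.I_im, Complex.neg_im, Complex.neg_re, Complex.mul_re] at i1 i2
    apply Complex.ext <;> simp only [Complex.conj_re, Complex.conj_im] <;> nlinarith
  -- Cauchy–Schwarz style bound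
  have hCS : ∀ x : A, Complex.normSq (φ x) ≤ p * (‖φ‖ * (‖x‖ * ‖x‖)) := by
    intro x
    obtain ⟨q, hq0, hq⟩ := hφ _ (star_mul_self_nonneg x)
    have hqle : q ≤ ‖φ‖ * (‖x‖ * ‖x‖) := by
      have := φ.le_opNorm (star x * x)
      rw [hq, CStarRing.norm_star_mul_self] at this
      simpa [_root_.abs_of_nonneg hq0, mul_assoc] using this
    -- quadratic positivity
    have quad : ∀ t : ℂ, 0 ≤ p + 2 * (t * φ x).re + Complex.normSq t * q := by
      intro t
      obtain ⟨r, hr0, hr⟩ := hφ _ (star_mul_self_nonneg (1 + t • x))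
      have e : star (1 + t • x) * (1 + t • x)
          = 1 + t • x + (starRingEnd ℂ t) • star x
            + ((starRingEnd ℂ t) * t) • (star x * x) := by
        rw [star_add, star_one, star_smul, Complex.star_def]
        rw [add_mul, one_mul, mul_add, mul_one, smul_mul_assoc, mul_smul_comm,
          smul_smul]
        abel
      rw [e] at hr
      simp only [map_add, hp, hq, map_smul, smul_eq_mul, hstar] at hr
      have := congrArg Complex.re hr
      simp only [Complex.add_re, Complex.ofReal_re, Complex.mul_re, Complex.mul_im,
        Complex.conj_re, Complex.conj_im, Complex.ofReal_im] at this
      simp only [Complex.normSq_apply, Complex.mul_re, Complex.mul_im]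
      nlinarith [hr0, this]
    have quad' : ∀ s : ℝ, 0 ≤ (q * Complex.normSq (φ x)) * (s * s)
        + (-2 * Complex.normSq (φ x)) * s + p := by
      intro s
      have h := quad (-(s : ℂ) * starRingEnd ℂ (φ x))
      have e1 : ((-(s : ℂ) * starRingEnd ℂ (φ x)) * φ x).re
          = -(s * Complex.normSq (φ x)) := by
        rw [mul_assoc, mul_comm (starRingEnd ℂ (φ x)) (φ x), Complex.mul_conj]
        simp
      have e2 : Complex.normSq (-(s : ℂ) * starRingEnd ℂ (φ x))
          = s ^ 2 * Complex.normSq (φ x) := by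
        rw [Complex.normSq_mul, Complex.normSq_conj]
        simp [sq]
      rw [e1, e2] at h
      nlinarith [h]
    have hdis : discrim (q * Complex.normSq (φ x)) (-2 * Complex.normSq (φ x)) p ≤ 0 :=
      discrim_le_zero quad'
    rw [discrim] at hdis
    have h1 : Complex.normSq (φ x) ≤ p * q := by
      rcases (Complex.normSq_nonneg (φ x)).eq_or_lt with h0 | h0
      · rw [← h0]; positivity
      · nlinarith [hdis, h0]
    calc Complex.normSq (φ x) ≤ p * q := h1
      _ ≤ p * (‖φ‖ * (‖x‖ * ‖x‖)) := mul_le_mul_of_nonneg_left hqle hp0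
  -- deduce ‖φ‖ ≤ p
  have hb : ∀ x : A, ‖φ x‖ ≤ Real.sqrt (p * ‖φ‖) * ‖x‖ := by
    intro x
    have h1 : ‖φ x‖ = Real.sqrt (Complex.normSq (φ x)) := by
      rw [Complex.norm_def]
    rw [h1]
    have h2 : Complex.normSq (φ x) ≤ (p * ‖φ‖) * (‖x‖ * ‖x‖) := by
      have := hCS x; nlinarith
    calc Real.sqrt (Complex.normSq (φ x)) ≤ Real.sqrt ((p * ‖φ‖) * (‖x‖ * ‖x‖)) :=
          Real.sqrt_le_sqrt h2
      _ = Real.sqrt (p * ‖φ‖) * ‖x‖ := by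
          rw [Real.sqrt_mul (by positivity), Real.sqrt_mul_self (norm_nonneg x)]
  have hle : ‖φ‖ ≤ p := by
    have h1 : ‖φ‖ ≤ Real.sqrt (p * ‖φ‖) := φ.opNorm_le_bound (Real.sqrt_nonneg _) hb
    have h2 : Real.sqrt (p * ‖φ‖) ^ 2 = p * ‖φ‖ := Real.sq_sqrt (by positivity)
    nlinarith [norm_nonneg φ, Real.sqrt_nonneg (p * ‖φ‖)]
  have hge : p ≤ ‖φ‖ := by
    rcases subsingleton_or_nontrivial A with hsub | hnt
    · have : (1 : A) = 0 := Subsingleton.elim _ _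
      rw [this, map_zero] at hp
      have : p = 0 := by exact_mod_cast hp.symm
      rw [this]; exact norm_nonneg φ
    · have h1 : ‖φ 1‖ ≤ ‖φ‖ * ‖(1 : A)‖ := φ.le_opNorm 1
      rw [hp, CStarRing.norm_one] at h1
      simpa [_root_.abs_of_nonneg hp0] using h1
  linarith

/-- The norm measure of an algebraic state-valued measure: `S ↦ ‖m(S)‖` is countably
additive, defines a finite measure `m̂`, and `m` is absolutely continuous w.r.t. `m̂`. -/
theorem stateValuedMeasure_norm_measure
    {A : Type*} [NormedRing A] [StarRing A] [CStarRing A]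
    [NormedAlgebra ℂ A] [StarModule ℂ A] [PartialOrder A] [StarOrderedRing A]
    {X : Type*} [MeasurableSpace X]
    (m : Set X → StrongDual ℂ A)
    (hempty : m ∅ = 0)
    (hadd : ∀ S : ℕ → Set X, (∀ n, MeasurableSet (S n)) → Pairwise (Disjoint on S) →
      HasSum (fun n => m (S n)) (m (⋃ n, S n)))
    (hpos : ∀ S : Set X, MeasurableSet S → ∀ a : A, 0 ≤ a →
      ∃ r : ℝ, 0 ≤ r ∧ m S a = (r : ℂ)) :
    ‖m ∅‖ = 0 ∧
    (∀ S : ℕ → Set X, (∀ n, MeasurableSet (S n)) → Pairwise (Disjoint on S) →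
      HasSum (fun n => ‖m (S n)‖) ‖m (⋃ n, S n)‖) ∧
    (∃ mhat : MeasureTheory.Measure X, MeasureTheory.IsFiniteMeasure mhat ∧
      ∀ S : Set X, MeasurableSet S → mhat S = ENNReal.ofReal ‖m S‖) ∧
    (∀ S : Set X, MeasurableSet S → ‖m S‖ = 0 → m S = 0) := by
  -- key: the value at 1 is the norm
  have hone : (0 : A) ≤ 1 := by
    have := star_mul_self_nonneg (1 : A); rwa [star_one, one_mul] at this
  have hkey : ∀ T : Set X, MeasurableSet T → m T 1 = ((‖m T‖ : ℝ) : ℂ) := by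
    intro T hT
    obtain ⟨r, hr0, hr⟩ := hpos T hT 1 hone
    have := posFunctional_norm_eq (m T) (hpos T hT) hr0 hr
    rw [hr, this]
  have hsum : ∀ S : ℕ → Set X, (∀ n, MeasurableSet (S n)) → Pairwise (Disjoint on S) →
      HasSum (fun n => ‖m (S n)‖) ‖m (⋃ n, S n)‖ := by
    intro S hS hd
    have h1 : HasSum (fun n => m (S n) 1) (m (⋃ n, S n) 1) :=
      (ContinuousLinearMap.apply ℂ ℂ (1 : A)).hasSum (hadd S hS hd)
    have h2 : HasSum (fun n => (m (S n) 1).re) ((m (⋃ n, S n) 1).re) :=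
      Complex.reCLM.hasSum h1
    have e1 : (fun n => (m (S n) 1).re) = fun n => ‖m (S n)‖ := by
      funext n; rw [hkey _ (hS n)]; simp
    have e2 : (m (⋃ n, S n) 1).re = ‖m (⋃ n, S n)‖ := by
      rw [hkey _ (MeasurableSet.iUnion hS)]; simp
    rwa [e1, e2] at h2
  refine ⟨by rw [hempty]; simp, hsum, ?_, ?_⟩
  · refine ⟨MeasureTheory.Measure.ofMeasurable (fun S _ => ENNReal.ofReal ‖m S‖)
      (by show ENNReal.ofReal ‖m ∅‖ = 0; rw [hempty]; simp) ?_, ?_, ?_⟩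
    · intro S hS hd
      have h := hsum S hS hd
      show ENNReal.ofReal ‖m (⋃ i, S i)‖ = ∑' i, ENNReal.ofReal ‖m (S i)‖
      rw [← h.tsum_eq, ENNReal.ofReal_tsum_of_nonneg (fun n => norm_nonneg _) h.summable]
    · constructor
      rw [MeasureTheory.Measure.ofMeasurable_apply _ MeasurableSet.univ]
      exact ENNReal.ofReal_lt_top
    · intro S hS
      rw [MeasureTheory.Measure.ofMeasurable_apply _ hS]
  · intro S _ h
    exact norm_eq_zero.mp h
end

section
/- Let A be a C*-algebra and (X, Σ) a measurable space. Let m be a map from measurable sets to continuous linear functionals on A such that: m(∅) = 0; m is finitely additive (m(S ∪ T) = m(S) + m(T) for disjoint measurable S, T); every m(S) is a positive functional (i.e., (m S)(a) is real and nonnegative for every a ∈ A with 0 ≤ a); and m is weak-* countably additive, i.e., for every a ∈ A and every sequence (Sₙ) of pairwise disjoint measurable sets, Σₙ (m Sₙ)(a) converges to (m(⋃ₙ Sₙ))(a). Then m is countably additive in norm: for every sequence (Sₙ) of pairwise disjoint measurable sets, Σₙ m(Sₙ) converges unconditionally in the dual norm of A' to m(⋃ₙ Sₙ). -/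
open scoped Function

section Aux

variable {A : Type*} [NormedRing A] [StarRing A] [CStarRing A]
    [NormedAlgebra ℂ A] [StarModule ℂ A] [PartialOrder A] [StarOrderedRing A]

/-- A positive functional is hermitian. -/
lemma aux_herm (φ : StrongDual ℂ A)
    (hφ : ∀ a : A, 0 ≤ a → ∃ r : ℝ, 0 ≤ r ∧ φ a = (r : ℂ))
    (y : A) : φ (star y) = starRingEnd ℂ (φ y) := by
  have him : ∀ z : A, (φ (star z * z)).im = 0 := by
    intro z
    obtain ⟨r, _, hr⟩ := hφ _ (star_mul_self_nonneg z)
    rw [hr]; simp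
  have h1A : (0 : A) ≤ 1 := by simpa using star_mul_self_nonneg (1 : A)
  have h1 : (φ 1).im = 0 := by
    obtain ⟨r, _, hr⟩ := hφ 1 h1A; rw [hr]; simp
  have hyy : (φ (star y * y)).im = 0 := him y
  -- from z = 1 + y : im (φ y) + im (φ (star y)) = 0
  have e1 : star (1 + y) * (1 + y) = 1 + y + star y + star y * y := by
    rw [star_add, star_one]; noncomm_ring
  have E1 : (φ 1).im + (φ y).im + (φ (star y)).im + (φ (star y * y)).im = 0 := by
    have := him (1 + y)
    rw [e1] at this
    simpa [map_add] using this
  have E1' : (φ y).im + (φ (star y)).im = 0 := by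
    rw [h1, hyy] at E1; linarith
  -- from z = 1 + I • y : re (φ y) - re (φ (star y)) = 0
  have e2 : star (1 + Complex.I • y) * (1 + Complex.I • y)
      = 1 + Complex.I • y + (starRingEnd ℂ Complex.I) • star y
        + (starRingEnd ℂ Complex.I * Complex.I) • (star y * y) := by
    have hs : star (Complex.I • y) = (starRingEnd ℂ Complex.I) • star y := by
      rw [star_smul]; rfl
    rw [star_add, star_one, hs]
    simp only [add_mul, mul_add, one_mul, mul_one, smul_mul_smul_comm,
      smul_mul_assoc, mul_smul_comm]
    module
  have E2 : (φ 1).im + (Complex.I * φ y).im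
      + (starRingEnd ℂ Complex.I * φ (star y)).im
      + ((starRingEnd ℂ Complex.I * Complex.I) * φ (star y * y)).im = 0 := by
    have := him (1 + Complex.I • y)
    rw [e2] at this
    simpa [map_add, map_smul, smul_eq_mul] using this
  have E2' : (φ y).re - (φ (star y)).re = 0 := by
    have hcI : starRingEnd ℂ Complex.I * Complex.I = 1 := by
      simp [Complex.conj_I]
    rw [hcI, one_mul, hyy, h1] at E2
    simp only [Complex.mul_im, Complex.I_re, Complex.I_im, Complex.conj_I,
      Complex.neg_re, Complex.neg_im] at E2
    linarith
  apply Complex.ext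
  · rw [Complex.conj_re]; linarith
  · rw [Complex.conj_im]; linarith

/-- Cauchy–Schwarz against the unit for a positive functional. -/
lemma aux_cs (φ : StrongDual ℂ A)
    (hφ : ∀ a : A, 0 ≤ a → ∃ r : ℝ, 0 ≤ r ∧ φ a = (r : ℂ))
    {r1 : ℝ} (h1 : φ 1 = (r1 : ℂ)) (hr1 : 0 ≤ r1)
    (y : A) {r2 : ℝ} (h2 : φ (star y * y) = (r2 : ℂ)) (hr2 : 0 ≤ r2) :
    ‖φ y‖ ^ 2 ≤ r1 * r2 := by
  by_cases hc : φ y = 0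
  · rw [hc]; simpa using mul_nonneg hr1 hr2
  set c : ℂ := φ y with hcdef
  have habs : (‖c‖ : ℝ) ≠ 0 := by
    simpa using hc
  set u : ℂ := (starRingEnd ℂ c) / ((‖c‖ : ℝ) : ℂ) with hu
  have hcc : starRingEnd ℂ c * c = ((‖c‖ : ℝ) ^ 2 : ℝ) := by
    rw [mul_comm, Complex.mul_conj]
    norm_cast
    exact Complex.normSq_eq_norm_sq c
  have hne : ((‖c‖ : ℝ) : ℂ) ≠ 0 := by exact_mod_cast habs
  have huc : u * c = ((‖c‖ : ℝ) : ℂ) := by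
    rw [hu, div_mul_eq_mul_div, hcc]
    rw [div_eq_iff hne]
    push_cast
    ring
  have huu : starRingEnd ℂ u * u = 1 := by
    rw [hu, map_div₀, Complex.conj_conj, Complex.conj_ofReal]
    rw [div_mul_div_comm, mul_comm c (starRingEnd ℂ c), hcc]
    rw [show (((‖c‖ : ℝ) : ℂ) * ((‖c‖ : ℝ) : ℂ))
        = ((‖c‖ ^ 2 : ℝ) : ℂ) by push_cast; ring]
    exact div_self (by exact_mod_cast pow_ne_zero 2 habs)
  have key : ∀ t : ℝ, 0 ≤ r1 * (t * t) + (2 * ‖c‖) * t + r2 := by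
    intro t
    set z : A := (t : ℂ) • 1 + u • y with hz
    have hstarz : star z = (t : ℂ) • 1 + (starRingEnd ℂ u) • star y := by
      rw [hz, star_add, star_smul, star_smul, star_one]
      congr 1
      · rw [RCLike.star_def, Complex.conj_ofReal]
    have hexp : star z * z = ((t : ℂ) * t) • 1 + ((t : ℂ) * u) • y
        + ((t : ℂ) * starRingEnd ℂ u) • star y
        + (starRingEnd ℂ u * u) • (star y * y) := by
      rw [hstarz, hz]
      simp only [add_mul, mul_add, one_mul, mul_one, smul_mul_smul_comm,
        smul_mul_assoc, mul_smul_comm]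
      module
    have hval : φ (star z * z)
        = ((r1 * (t * t) + (2 * ‖c‖) * t + r2 : ℝ) : ℂ) := by
      rw [hexp]
      simp only [map_add, map_smul, smul_eq_mul]
      rw [h1, h2, aux_herm φ hφ y, ← hcdef, huu]
      have h3 : (t : ℂ) * u * c = (t : ℂ) * ((‖c‖ : ℝ) : ℂ) := by
        rw [mul_assoc, huc]
      have h4 : (t : ℂ) * starRingEnd ℂ u * starRingEnd ℂ c
          = (t : ℂ) * ((‖c‖ : ℝ) : ℂ) := by
        rw [mul_assoc, ← map_mul, huc, Complex.conj_ofReal]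
      rw [h3, h4]
      push_cast
      ring
    obtain ⟨r, hr0, hr⟩ := hφ _ (star_mul_self_nonneg z)
    rw [hr] at hval
    have hre : r = r1 * (t * t) + (2 * ‖c‖) * t + r2 := by
      exact_mod_cast hval
    linarith
  have hd := discrim_le_zero key
  rw [discrim] at hd
  have hnorm : ‖φ y‖ = ‖c‖ := by rw [← hcdef]
  rw [hnorm]
  nlinarith [norm_nonneg c]

/-- The norm of a positive functional is bounded by its value at the unit. -/
lemma aux_norm_le (φ : StrongDual ℂ A)
    (hφ : ∀ a : A, 0 ≤ a → ∃ r : ℝ, 0 ≤ r ∧ φ a = (r : ℂ)) :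
    ‖φ‖ ≤ (φ 1).re := by
  have h1A : (0 : A) ≤ 1 := by simpa using star_mul_self_nonneg (1 : A)
  obtain ⟨r1, hr1, h1⟩ := hφ 1 h1A
  have h1re : (φ 1).re = r1 := by rw [h1]; simp
  rw [h1re]
  have hK0 : 0 ≤ ‖φ‖ := norm_nonneg φ
  have hbound : ∀ a : A, ‖φ a‖ ^ 2 ≤ r1 * ‖φ‖ * ‖a‖ ^ 2 := by
    intro a
    obtain ⟨r2, hr2, h2⟩ := hφ _ (star_mul_self_nonneg a)
    have hcs := aux_cs φ hφ h1 hr1 a h2 hr2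
    have hr2le : r2 ≤ ‖φ‖ * ‖a‖ ^ 2 := by
      have hb : ‖φ (star a * a)‖ ≤ ‖φ‖ * ‖star a * a‖ := φ.le_opNorm (star a * a)
      rw [h2] at hb
      have : |r2| ≤ ‖φ‖ * ‖star a * a‖ := by simpa using hb
      rw [abs_of_nonneg hr2] at this
      calc r2 ≤ ‖φ‖ * ‖star a * a‖ := this
        _ = ‖φ‖ * ‖a‖ ^ 2 := by rw [CStarRing.norm_star_mul_self]; ring
    calc ‖φ a‖ ^ 2 ≤ r1 * r2 := hcs
      _ ≤ r1 * (‖φ‖ * ‖a‖ ^ 2) := mul_le_mul_of_nonneg_left hr2le hr1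
      _ = r1 * ‖φ‖ * ‖a‖ ^ 2 := by ring
  have hsq : 0 ≤ r1 * ‖φ‖ := mul_nonneg hr1 hK0
  have hKle : ‖φ‖ ≤ Real.sqrt (r1 * ‖φ‖) := by
    apply φ.opNorm_le_bound (Real.sqrt_nonneg _)
    intro a
    have hb := hbound a
    nlinarith [Real.sq_sqrt hsq, Real.sqrt_nonneg (r1 * ‖φ‖), norm_nonneg (φ a),
      norm_nonneg a, mul_nonneg (Real.sqrt_nonneg (r1 * ‖φ‖)) (norm_nonneg a)]
  have hK2 : ‖φ‖ ^ 2 ≤ r1 * ‖φ‖ := by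
    nlinarith [Real.sq_sqrt hsq, Real.sqrt_nonneg (r1 * ‖φ‖)]
  rcases eq_or_lt_of_le hK0 with h | h
  · rw [← h]; exact hr1
  · nlinarith

end Aux

/-- Equivalence of the two definitions of a state-valued measure: a positive,
finitely additive, weak-* countably additive dual-valued set function is countably
additive in the dual norm (unconditional convergence = `HasSum`). -/
theorem weakStar_sigmaAdditive_implies_norm_sigmaAdditive
    {A : Type*} [NormedRing A] [StarRing A] [CStarRing A]
    [NormedAlgebra ℂ A] [StarModule ℂ A] [PartialOrder A] [StarOrderedRing A]
    {X : Type*} [MeasurableSpace X]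
    (m : Set X → StrongDual ℂ A)
    (hempty : m ∅ = 0)
    (haddfin : ∀ S T : Set X, MeasurableSet S → MeasurableSet T → Disjoint S T →
      m (S ∪ T) = m S + m T)
    (hpos : ∀ S : Set X, MeasurableSet S → ∀ a : A, 0 ≤ a →
      ∃ r : ℝ, 0 ≤ r ∧ m S a = (r : ℂ))
    (hweak : ∀ (a : A) (S : ℕ → Set X), (∀ n, MeasurableSet (S n)) →
      Pairwise (Disjoint on S) → HasSum (fun n => m (S n) a) (m (⋃ n, S n) a)) :
    ∀ S : ℕ → Set X, (∀ n, MeasurableSet (S n)) → Pairwise (Disjoint on S) →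
      HasSum (fun n => m (S n)) (m (⋃ n, S n)) := by
  intro S hS hdisj
  have h1A : (0 : A) ≤ 1 := by simpa using star_mul_self_nonneg (1 : A)
  set U : Set X := ⋃ n, S n with hU
  have hUmeas : MeasurableSet U := MeasurableSet.iUnion hS
  -- finite unions
  set V : ℕ → Set X := fun N => ⋃ n ∈ Finset.range N, S n with hV
  have hVmeas : ∀ N, MeasurableSet (V N) := fun N =>
    (Finset.range N).measurableSet_biUnion (fun n _ => hS n)
  have hVU : ∀ N, V N ⊆ U := by
    intro N x hx
    simp only [hV, Set.mem_iUnion] at hx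
    obtain ⟨n, _, hn⟩ := hx
    exact Set.mem_iUnion.mpr ⟨n, hn⟩
  have hmV : ∀ N, m (V N) = ∑ n ∈ Finset.range N, m (S n) := by
    intro N
    induction N with
    | zero => simpa [hV] using hempty
    | succ N ih =>
      have hdisjVN : Disjoint (V N) (S N) := by
        rw [hV, Set.disjoint_left]
        intro x hx hxN
        simp only [Set.mem_iUnion] at hx
        obtain ⟨n, hn, hxn⟩ := hx
        have hne : n ≠ N := Nat.ne_of_lt (Finset.mem_range.mp hn)
        exact (Set.disjoint_left.mp (hdisj hne)) hxn hxN
      have hVsucc : V (N + 1) = V N ∪ S N := by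
        rw [hV]
        simp [Finset.range_add_one, Set.biUnion_insert, Set.union_comm]
      rw [hVsucc, haddfin _ _ (hVmeas N) (hS N) hdisjVN, ih,
        Finset.sum_range_succ]
  -- partial sums of norms are bounded
  have hbdd : ∀ N, ∑ n ∈ Finset.range N, ‖m (S n)‖ ≤ (m U 1).re := by
    intro N
    have step1 : ∑ n ∈ Finset.range N, ‖m (S n)‖
        ≤ ∑ n ∈ Finset.range N, ((m (S n)) 1).re :=
      Finset.sum_le_sum fun n _ => aux_norm_le (m (S n)) (hpos (S n) (hS n))
    have step2 : ∑ n ∈ Finset.range N, ((m (S n)) 1).re = ((m (V N)) 1).re := by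
      rw [hmV N]
      simp [ContinuousLinearMap.sum_apply, Complex.re_sum]
    have step3 : ((m (V N)) 1).re ≤ (m U 1).re := by
      have hsplit : U = V N ∪ (U \ V N) := (Set.union_diff_cancel (hVU N)).symm
      have hdisj' : Disjoint (V N) (U \ V N) := Set.disjoint_sdiff_right
      have hmU : m U = m (V N) + m (U \ V N) := by
        conv_lhs => rw [hsplit]
        exact haddfin _ _ (hVmeas N) (hUmeas.diff (hVmeas N)) hdisj'
      obtain ⟨r, hr0, hr⟩ := hpos (U \ V N) (hUmeas.diff (hVmeas N)) 1 h1A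
      have hrre : ((m (U \ V N)) 1).re = r := by rw [hr]; simp
      rw [hmU]
      simp only [ContinuousLinearMap.add_apply, Complex.add_re]
      linarith
    linarith [step1, step2.le, step3]
  have hsummable : Summable fun n => ‖m (S n)‖ :=
    summable_of_sum_range_le (fun n => norm_nonneg _) hbdd
  have hs : Summable fun n => m (S n) := hsummable.of_norm
  have hL : HasSum (fun n => m (S n)) (∑' n, m (S n)) := hs.hasSum
  have hLU : (∑' n, m (S n)) = m U := by
    apply ContinuousLinearMap.ext
    intro a
    have h1 : HasSum (fun n => (m (S n)) a) ((∑' n, m (S n)) a) :=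
      (ContinuousLinearMap.apply ℂ ℂ a).hasSum hL
    exact h1.unique (hweak a S hS hdisj)
  rw [← hLU]
  exact hL
end

section
/- Let A be a C*-algebra, (X, Σ) a measurable space, and m a state-valued vector measure on (X, Σ): m maps measurable sets to continuous linear functionals on A, m(∅) = 0, m is countably additive in the dual norm, and for every measurable S and every a ∈ A with 0 ≤ a the value (m S)(a) is a nonnegative real number. For each a ∈ A with 0 ≤ a, let μ_a denote the finite measure on (X, Σ) given by μ_a(S) = (m S)(a), and let m̂ denote the norm measure, the finite measure with m̂(S) = ‖m(S)‖. If f : X → [0, ∞) is measurable and ∫_X f dμ_a < ∞ for every a ∈ A with 0 ≤ a, then ∫_X f dm̂ < ∞. -/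
open scoped Function
open MeasureTheory

open Complex in
/-- A continuous linear functional on a unital C*-algebra that is nonnegative on
nonnegative elements has norm equal to its value at `1`. -/
theorem norm_eq_re_apply_one_of_pos
    {A : Type*} [NormedRing A] [StarRing A] [CStarRing A]
    [NormedAlgebra ℂ A] [StarModule ℂ A] [PartialOrder A] [StarOrderedRing A]
    (φ : A →L[ℂ] ℂ)
    (hφ : ∀ a : A, 0 ≤ a → ∃ r : ℝ, 0 ≤ r ∧ φ a = (r : ℂ)) :
    ‖φ‖ = (φ 1).re := by
  have h1 : (0 : A) ≤ 1 := by simpa using star_mul_self_nonneg (1 : A)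
  obtain ⟨p, hp0, hp⟩ := hφ 1 h1
  have hpre : (φ 1).re = p := by rw [hp]; simp
  -- Cauchy–Schwarz-type bound for unit vectors
  have CS : ∀ x : A, ‖x‖ ≤ 1 → ‖φ x‖ ^ 2 ≤ p * ‖φ‖ := by
    intro x hx
    obtain ⟨q, hq0, hq⟩ := hφ (star x * x) (star_mul_self_nonneg x)
    have hqφ : q ≤ ‖φ‖ := by
      have h1' : (φ (star x * x)).re ≤ ‖φ (star x * x)‖ := Complex.re_le_norm _
      have h2 : ‖φ (star x * x)‖ ≤ ‖φ‖ * ‖star x * x‖ := φ.le_opNorm _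
      have h3 : ‖star x * x‖ ≤ 1 := by
        calc ‖star x * x‖ ≤ ‖star x‖ * ‖x‖ := norm_mul_le _ _
          _ ≤ 1 * 1 := by rw [norm_star]; exact mul_le_mul hx hx (norm_nonneg x) zero_le_one
          _ = 1 := one_mul 1
      have : q = (φ (star x * x)).re := by rw [hq]; simp
      nlinarith [norm_nonneg φ]
    -- general expansion
    have expand : ∀ c : ℂ, φ (star (c • (1 : A) + x) * (c • 1 + x)) =
        (starRingEnd ℂ c * c) * (p : ℂ) + starRingEnd ℂ c * φ x + c * φ (star x) + (q : ℂ) := by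
      intro c
      have hA : star (c • (1 : A) + x) * (c • 1 + x) =
          (starRingEnd ℂ c * c) • (1 : A) + starRingEnd ℂ c • x + c • star x + star x * x := by
        rw [star_add, star_smul, star_one, Complex.star_def]
        rw [add_mul, mul_add, mul_add]
        simp only [smul_mul_assoc, mul_smul_comm, smul_smul, one_mul, mul_one]
        rw [mul_comm c (starRingEnd ℂ c)]
        abel
      rw [hA]
      simp only [map_add, ContinuousLinearMap.map_smul, smul_eq_mul, hp, hq]
    have hreal : ∀ c : ℂ, ((starRingEnd ℂ c) * φ x + c * φ (star x)).im = 0 := by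
      intro c
      obtain ⟨r, hr0, hr⟩ := hφ (star (c • (1 : A) + x) * (c • 1 + x))
        (star_mul_self_nonneg _)
      have heq := (expand c).symm.trans hr
      have him := congrArg Complex.im heq
      have ha : ((starRingEnd ℂ c) * c * (p : ℂ)).im = 0 := by
        rw [← Complex.normSq_eq_conj_mul_self, ← Complex.ofReal_mul]
        exact Complex.ofReal_im _
      simp only [Complex.add_im, Complex.ofReal_im, ha, Complex.mul_im] at him ⊢
      linarith
    -- conjugate symmetry: φ (star x) = conj (φ x)
    have hv : φ (star x) = starRingEnd ℂ (φ x) := by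
      have t1 := hreal 1
      have t2 := hreal Complex.I
      apply Complex.ext
      · simp only [Complex.add_im, Complex.mul_im, Complex.conj_re, Complex.conj_im,
          Complex.one_re, Complex.one_im, Complex.I_re, Complex.I_im] at t1 t2 ⊢
        linarith
      · simp only [Complex.add_im, Complex.mul_im, Complex.conj_re, Complex.conj_im,
          Complex.one_re, Complex.one_im, Complex.I_re, Complex.I_im] at t1 t2 ⊢
        linarith
    by_cases hu : φ x = 0
    · have : (0:ℝ) ≤ p * ‖φ‖ := mul_nonneg hp0 (norm_nonneg φ)
      simpa [hu] using this
    -- quadratic in t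
    have hnu : ‖φ x‖ ≠ 0 := norm_ne_zero_iff.mpr hu
    have habs : ‖φ x‖ ≠ 0 := hnu
    have hnormSq : ((Complex.normSq (φ x) : ℝ) : ℂ) = ((‖φ x‖ * ‖φ x‖ : ℝ) : ℂ) := by
      rw [Complex.normSq_eq_norm_sq]
      push_cast
      ring
    have key : ∀ t : ℝ, 0 ≤ p * (t * t) + (2 * ‖φ x‖) * t + q := by
      intro t
      set s : ℝ := t / ‖φ x‖ with hs
      set c : ℂ := (s : ℂ) * φ x with hc
      obtain ⟨r, hr0, hr⟩ := hφ (star (c • (1 : A) + x) * (c • 1 + x))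
        (star_mul_self_nonneg _)
      have heq := (expand c).symm.trans hr
      have h1c : starRingEnd ℂ c * c = ((t * t : ℝ) : ℂ) := by
        have e1 : starRingEnd ℂ c * c
            = ((s : ℂ) * (s : ℂ)) * (starRingEnd ℂ (φ x) * φ x) := by
          rw [hc, map_mul, Complex.conj_ofReal]
          ring
        rw [e1, ← Complex.normSq_eq_conj_mul_self, hnormSq]
        have e2 : s * s * (‖φ x‖ * ‖φ x‖) = t * t := by
          rw [hs]
          field_simp
        have e3 := congrArg (Complex.ofReal) e2
        push_cast at e3 ⊢
        linear_combination e3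
      have h2c : starRingEnd ℂ c * φ x + c * starRingEnd ℂ (φ x)
          = ((2 * ‖φ x‖ * t : ℝ) : ℂ) := by
        have e1 : starRingEnd ℂ c * φ x + c * starRingEnd ℂ (φ x)
            = ((s : ℂ) + (s : ℂ)) * (starRingEnd ℂ (φ x) * φ x) := by
          rw [hc, map_mul, Complex.conj_ofReal]
          ring
        rw [e1, ← Complex.normSq_eq_conj_mul_self, hnormSq]
        have e2 : (s + s) * (‖φ x‖ * ‖φ x‖) = 2 * ‖φ x‖ * t := by
          rw [hs]
          field_simp
          ring
        have e3 := congrArg (Complex.ofReal) e2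
        push_cast at e3 ⊢
        linear_combination e3
      rw [h1c, hv] at heq
      have hre : ((p * (t * t) + 2 * ‖φ x‖ * t + q : ℝ) : ℂ) = (r : ℂ) := by
        push_cast
        push_cast at heq h2c
        linear_combination heq - h2c
      have := Complex.ofReal_inj.mp hre
      linarith
    have hd := discrim_le_zero key
    rw [discrim] at hd
    nlinarith [norm_nonneg (φ x), mul_le_mul_of_nonneg_left hqφ hp0]
  -- ‖φ‖ ≤ p
  have hle : ‖φ‖ ≤ p := by
    have hbound : ∀ x : A, ‖φ x‖ ≤ Real.sqrt (p * ‖φ‖) * ‖x‖ := by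
      intro x
      by_cases hx0 : x = 0
      · simp [hx0]
      have hnx : (0 : ℝ) < ‖x‖ := norm_pos_iff.mpr hx0
      set y : A := ((‖x‖⁻¹ : ℝ) : ℂ) • x with hy
      have hny : ‖y‖ ≤ 1 := by
        rw [hy, norm_smul]
        simp [_root_.abs_of_nonneg (inv_nonneg.mpr hnx.le), inv_mul_cancel₀ hnx.ne']
      have := CS y hny
      have hyval : ‖φ y‖ = ‖x‖⁻¹ * ‖φ x‖ := by
        rw [hy, φ.map_smul, norm_smul]
        simp [_root_.abs_of_nonneg (inv_nonneg.mpr hnx.le)]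
      rw [hyval] at this
      have hsq : (‖x‖⁻¹ * ‖φ x‖) ≤ Real.sqrt (p * ‖φ‖) := by
        have h' : (‖x‖⁻¹ * ‖φ x‖) ^ 2 ≤ p * ‖φ‖ := this
        calc ‖x‖⁻¹ * ‖φ x‖ = Real.sqrt ((‖x‖⁻¹ * ‖φ x‖) ^ 2) := by
              rw [Real.sqrt_sq (by positivity)]
          _ ≤ Real.sqrt (p * ‖φ‖) := Real.sqrt_le_sqrt h'
      calc ‖φ x‖ = (‖x‖⁻¹ * ‖φ x‖) * ‖x‖ := by field_simp
        _ ≤ Real.sqrt (p * ‖φ‖) * ‖x‖ := by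
            exact mul_le_mul_of_nonneg_right hsq hnx.le
    have hφle : ‖φ‖ ≤ Real.sqrt (p * ‖φ‖) :=
      φ.opNorm_le_bound (Real.sqrt_nonneg _) hbound
    have h2 : ‖φ‖ ^ 2 ≤ p * ‖φ‖ := by
      have := Real.sq_sqrt (mul_nonneg hp0 (norm_nonneg φ))
      nlinarith [norm_nonneg φ]
    rcases eq_or_lt_of_le (norm_nonneg φ) with h | h
    · rw [← h]; exact hp0
    · nlinarith
  -- p ≤ ‖φ‖
  have hge : p ≤ ‖φ‖ := by
    rcases subsingleton_or_nontrivial A with hs | hs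
    · have : (1 : A) = 0 := Subsingleton.elim _ _
      have : φ 1 = 0 := by rw [this, map_zero]
      rw [this] at hp
      have : p = 0 := by exact_mod_cast hp.symm
      rw [this]; exact norm_nonneg φ
    · calc p = (φ 1).re := hpre.symm
        _ ≤ ‖φ 1‖ := Complex.re_le_norm _
        _ ≤ ‖φ‖ * ‖(1 : A)‖ := φ.le_opNorm _
        _ = ‖φ‖ := by rw [CStarRing.norm_one, mul_one]
  rw [hpre]
  exact le_antisymm hle hge

/-- A nonnegative measurable function integrable against every scalar measure
`μ_a(S) = (m S)(a)` (for `a ≥ 0`) is integrable against the norm measure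
`m̂(S) = ‖m S‖` of the state-valued measure `m`. -/
theorem integrable_norm_measure_of_integrable_scalar
    {A : Type*} [NormedRing A] [StarRing A] [CStarRing A]
    [NormedAlgebra ℂ A] [StarModule ℂ A] [PartialOrder A] [StarOrderedRing A]
    {X : Type*} [MeasurableSpace X]
    (m : Set X → StrongDual ℂ A)
    (hempty : m ∅ = 0)
    (hadd : ∀ S : ℕ → Set X, (∀ n, MeasurableSet (S n)) → Pairwise (Disjoint on S) →
      HasSum (fun n => m (S n)) (m (⋃ n, S n)))
    (hpos : ∀ S : Set X, MeasurableSet S → ∀ a : A, 0 ≤ a →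
      ∃ r : ℝ, 0 ≤ r ∧ m S a = (r : ℂ))
    (μa : A → Measure X)
    (hμa : ∀ a : A, 0 ≤ a → ∀ S : Set X, MeasurableSet S →
      μa a S = ENNReal.ofReal (m S a).re)
    (mhat : Measure X)
    (hmhat : ∀ S : Set X, MeasurableSet S → mhat S = ENNReal.ofReal ‖m S‖)
    (f : X → ℝ) (hfmeas : Measurable f) (hf0 : ∀ x, 0 ≤ f x)
    (hint : ∀ a : A, 0 ≤ a → ∫⁻ x, ENNReal.ofReal (f x) ∂(μa a) < ⊤) :
    ∫⁻ x, ENNReal.ofReal (f x) ∂mhat < ⊤ := by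
  have h1 : (0 : A) ≤ 1 := by simpa using star_mul_self_nonneg (1 : A)
  have hmeq : mhat = μa 1 := by
    ext S hS
    rw [hmhat S hS, hμa 1 h1 S hS,
      norm_eq_re_apply_one_of_pos (m S) (fun a ha => hpos S hS a ha)]
  rw [hmeq]
  exact hint 1 h1
end

section
/- Let A be a C*-algebra, (X, Σ) a measurable space, and m a state-valued vector measure on (X, Σ): m maps measurable sets to continuous linear functionals on A, m(∅) = 0, m is countably additive in the dual norm, and for every measurable S and every a ∈ A with 0 ≤ a the value (m S)(a) is a nonnegative real number. For each a ∈ A with 0 ≤ a, let μ_a be the finite measure μ_a(S) = (m S)(a), and let m̂ be the norm measure m̂(S) = ‖m(S)‖. Let f : X → [0, ∞) be measurable with ∫_X f dμ_a < ∞ for every a ≥ 0. Then for every measurable S there exists a unique continuous linear functional I_S on A such that I_S(a) = ∫_S f dμ_a for every a ∈ A with 0 ≤ a; I_S is a positive functional and ‖I_S‖ ≤ ∫_S f dm̂. -/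
open scoped Function
open MeasureTheory

set_option linter.unusedSectionVars false

section Aux
variable {A : Type*} [NormedRing A] [StarRing A] [CStarRing A]
    [NormedAlgebra ℂ A] [StarModule ℂ A] [PartialOrder A] [StarOrderedRing A]

lemma svm_expand (ω : StrongDual ℂ A) (t : ℂ) (b : A) :
    ω (star ((1:A) + t • b) * ((1:A) + t • b)) =
      ω 1 + t * ω b + star t * ω (star b) + (star t * t) * ω (star b * b) := by
  have h : star ((1:A) + t • b) * ((1:A) + t • b) =
      1 + t • b + star t • star b + (star t * t) • (star b * b) := by
    simp only [star_add, star_one, star_smul, add_mul, mul_add, one_mul, mul_one,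
      smul_mul_assoc, mul_smul_comm, smul_smul, smul_add]
    module
  rw [h]
  simp [map_add, _root_.map_smul, smul_eq_mul]

lemma svm_real (ω : StrongDual ℂ A)
    (hω : ∀ a : A, 0 ≤ a → ∃ r : ℝ, 0 ≤ r ∧ ω a = r) (c : A) :
    0 ≤ (ω (star c * c)).re ∧ ω (star c * c) = (((ω (star c * c)).re : ℝ) : ℂ) := by
  obtain ⟨r, hr, he⟩ := hω _ (star_mul_self_nonneg c)
  rw [he]; simpa using hr

lemma svm_hermit (ω : StrongDual ℂ A)
    (hω : ∀ a : A, 0 ≤ a → ∃ r : ℝ, 0 ≤ r ∧ ω a = r) (b : A) :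
    ω (star b) = star (ω b) := by
  have h1A : (0:A) ≤ 1 := by simpa using star_mul_self_nonneg (1:A)
  have h1 : (ω 1).im = 0 := by
    obtain ⟨r, _, he⟩ := hω 1 h1A; rw [he]; simp
  have hb : (ω (star b * b)).im = 0 := by
    obtain ⟨r, _, he⟩ := hω _ (star_mul_self_nonneg b); rw [he]; simp
  have e1 := svm_expand ω 1 b
  have e2 := svm_expand ω Complex.I b
  obtain ⟨r1, _, he1⟩ := hω _ (star_mul_self_nonneg ((1:A) + (1:ℂ) • b))
  obtain ⟨r2, _, he2⟩ := hω _ (star_mul_self_nonneg ((1:A) + Complex.I • b))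
  rw [he1] at e1; rw [he2] at e2
  have i1 := congrArg Complex.im e1.symm
  have i2 := congrArg Complex.im e2.symm
  simp [Complex.add_im, Complex.mul_im, h1, hb, Complex.conj_I] at i1 i2
  apply Complex.ext
  · simp only [Complex.star_def, Complex.conj_re]
    linarith [i2]
  · simp only [Complex.star_def, Complex.conj_im]
    linarith [i1]

end Aux

section Aux2
variable {A : Type*} [NormedRing A] [StarRing A] [CStarRing A]
    [NormedAlgebra ℂ A] [StarModule ℂ A] [PartialOrder A] [StarOrderedRing A]

set_option linter.unusedSectionVars false

lemma svm_cs (ω : StrongDual ℂ A)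
    (hω : ∀ a : A, 0 ≤ a → ∃ r : ℝ, 0 ≤ r ∧ ω a = r) (b : A) :
    Complex.normSq (ω b) ≤ (ω 1).re * (ω (star b * b)).re := by
  have h1A : (0:A) ≤ 1 := by simpa using star_mul_self_nonneg (1:A)
  obtain ⟨P, hP0, hPe⟩ := hω 1 h1A
  have hPre : (ω 1).re = P := by rw [hPe]; simp
  obtain ⟨Q0, hQe⟩ := svm_real ω hω b
  set Q : ℝ := (ω (star b * b)).re with hQ
  set z : ℂ := ω b with hz
  set N : ℝ := Complex.normSq z with hN
  have hN0 : 0 ≤ N := Complex.normSq_nonneg z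
  have hzz : z * star z = ((N : ℝ) : ℂ) := by
    rw [Complex.star_def, Complex.mul_conj]
  have key : ∀ r : ℝ, 0 ≤ P - 2 * r * N + r ^ 2 * N * Q := by
    intro r
    set t : ℂ := -(r : ℂ) * star z with ht
    obtain ⟨u, hu0, hu⟩ := hω _ (star_mul_self_nonneg ((1:A) + t • b))
    rw [svm_expand ω t b, svm_hermit ω hω b] at hu
    have hst : star t = -(r : ℂ) * z := by
      rw [ht]
      simp [star_mul', Complex.star_def, Complex.conj_ofReal]
    have htz : t * z = ((-(r * N) : ℝ) : ℂ) := by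
      rw [ht, mul_assoc, mul_comm (star z) z, hzz]; push_cast; ring
    have hstz : star t * star z = ((-(r * N) : ℝ) : ℂ) := by
      rw [hst, mul_assoc, hzz]; push_cast; ring
    have htt : star t * t = ((r ^ 2 * N : ℝ) : ℂ) := by
      rw [hst, ht, show -(r:ℂ) * z * (-(r:ℂ) * star z) = ((r:ℂ) * r) * (z * star z) from by ring,
        hzz]
      push_cast; ring
    rw [hPe, hQe, htz, htt, hstz] at hu
    have hval : ((P - 2 * r * N + r ^ 2 * N * Q : ℝ) : ℂ) = (u : ℝ) := by
      push_cast at hu ⊢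
      linear_combination hu
    have := Complex.ofReal_injective hval
    linarith
  rw [hPre]
  rcases eq_or_lt_of_le Q0 with hQ0 | hQ0
  · have hNle : N = 0 := by
      by_contra hc
      have hc' : 0 < N := lt_of_le_of_ne hN0 (Ne.symm hc)
      have h := key ((P + 1) / (2 * N))
      rw [← hQ0] at h
      have h2 : 2 * ((P + 1) / (2 * N)) * N = P + 1 := by field_simp
      nlinarith
    rw [hNle, ← hQ0, mul_zero]
  · have h := key (1 / Q)
    have h2 : (1 / Q) ^ 2 * N * Q = (1 / Q) * N := by field_simp
    rw [h2] at h
    have : (1 / Q) * N ≤ P := by linarith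
    calc N = ((1 / Q) * N) * Q := by field_simp
      _ ≤ P * Q := by
        apply mul_le_mul_of_nonneg_right this (le_of_lt hQ0)

end Aux2

section Aux3
variable {A : Type*} [NormedRing A] [StarRing A] [CStarRing A]
    [NormedAlgebra ℂ A] [StarModule ℂ A] [PartialOrder A] [StarOrderedRing A]

set_option linter.unusedSectionVars false

lemma svm_norm_le (ω : StrongDual ℂ A)
    (hω : ∀ a : A, 0 ≤ a → ∃ r : ℝ, 0 ≤ r ∧ ω a = r) :
    ‖ω‖ ≤ (ω 1).re := by
  have h1A : (0:A) ≤ 1 := by simpa using star_mul_self_nonneg (1:A)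
  obtain ⟨P, hP0, hPe⟩ := hω 1 h1A
  have hPre : (ω 1).re = P := by rw [hPe]; simp
  rw [hPre]
  -- main bound on the unit ball
  have hbd : ∀ b : A, ‖b‖ ≤ 1 → ‖ω b‖ ≤ P := by
    intro b hb
    set d : A := star b * b with hd
    have hdsa : IsSelfAdjoint d := IsSelfAdjoint.star_mul_self b
    have hdn : ‖d‖ ≤ 1 := by
      rw [hd, CStarRing.norm_star_mul_self]
      nlinarith [norm_nonneg b]
    have hd0k : ∀ k : ℕ, 0 ≤ d ^ (2 ^ k) := by
      intro k
      cases k with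
      | zero => simpa [hd] using star_mul_self_nonneg b
      | succ k =>
        have he : d ^ (2 ^ (k + 1)) = star (d ^ (2 ^ k)) * d ^ (2 ^ k) := by
          rw [(hdsa.pow (2 ^ k)).star_eq, ← pow_add]
          congr 1
          omega
        rw [he]
        exact star_mul_self_nonneg _
    set x : ℕ → ℝ := fun k => (ω (d ^ (2 ^ k))).re with hx
    have hxe : ∀ k, 0 ≤ x k ∧ ω (d ^ (2 ^ k)) = ((x k : ℝ) : ℂ) := by
      intro k
      obtain ⟨r, hr0, hre⟩ := hω _ (hd0k k)
      constructor
      · rw [hx]; simp only [hre, Complex.ofReal_re]; exact hr0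
      · rw [hx]; simp only [hre, Complex.ofReal_re]
    have hxM : ∀ k, x k ≤ ‖ω‖ := by
      intro k
      calc x k ≤ ‖ω (d ^ (2 ^ k))‖ := Complex.re_le_norm _
        _ ≤ ‖ω‖ * ‖d ^ (2 ^ k)‖ := ω.le_opNorm _
        _ ≤ ‖ω‖ * 1 := by
          apply mul_le_mul_of_nonneg_left _ (norm_nonneg ω)
          calc ‖d ^ (2 ^ k)‖ ≤ ‖d‖ ^ (2 ^ k) := norm_pow_le' d (Nat.pos_of_ne_zero (by positivity))
            _ ≤ 1 := pow_le_one₀ (norm_nonneg d) hdn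
        _ = ‖ω‖ := mul_one _
    have hstep : ∀ k, x k ^ 2 ≤ P * x (k + 1) := by
      intro k
      have h := svm_cs ω hω (d ^ (2 ^ k))
      rw [(hxe k).2, Complex.normSq_ofReal, (hdsa.pow (2 ^ k)).star_eq, ← pow_add] at h
      have h2 : 2 ^ k + 2 ^ k = 2 ^ (k + 1) := by omega
      rw [h2] at h
      calc x k ^ 2 = x k * x k := sq (x k) ▸ by ring
        _ ≤ (ω 1).re * (ω (d ^ (2 ^ (k + 1)))).re := h
        _ = P * x (k + 1) := by rw [hPre]
    have hiter : ∀ k, x 0 ^ (2 ^ k) ≤ P ^ (2 ^ k - 1) * x k := by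
      intro k
      induction k with
      | zero => simpa using le_refl (x 0)
      | succ k ih =>
        have h1 : (1:ℕ) ≤ 2 ^ k := Nat.one_le_two_pow
        have e1 : x 0 ^ (2 ^ (k + 1)) = (x 0 ^ (2 ^ k)) ^ 2 := by
          rw [show (2:ℕ) ^ (k + 1) = 2 ^ k * 2 from by omega, pow_mul]
        have e2 : (x 0 ^ (2 ^ k)) ^ 2 ≤ (P ^ (2 ^ k - 1) * x k) ^ 2 := by
          apply pow_le_pow_left₀ (pow_nonneg (hxe 0).1 _) ih
        have e3 : (P ^ (2 ^ k - 1) * x k) ^ 2 = P ^ (2 ^ (k + 1) - 2) * x k ^ 2 := by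
          rw [mul_pow, ← pow_mul]
          congr 2
          omega
        have e4 : P ^ (2 ^ (k + 1) - 2) * x k ^ 2 ≤ P ^ (2 ^ (k + 1) - 2) * (P * x (k + 1)) := by
          apply mul_le_mul_of_nonneg_left (hstep k) (pow_nonneg hP0 _)
        have e5 : P ^ (2 ^ (k + 1) - 2) * (P * x (k + 1)) = P ^ (2 ^ (k + 1) - 1) * x (k + 1) := by
          rw [← mul_assoc, ← pow_succ]
          congr 2
          omega
        calc x 0 ^ (2 ^ (k + 1)) = (x 0 ^ (2 ^ k)) ^ 2 := e1
          _ ≤ (P ^ (2 ^ k - 1) * x k) ^ 2 := e2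
          _ = P ^ (2 ^ (k + 1) - 2) * x k ^ 2 := e3
          _ ≤ P ^ (2 ^ (k + 1) - 2) * (P * x (k + 1)) := e4
          _ = P ^ (2 ^ (k + 1) - 1) * x (k + 1) := e5
    have hx0 : x 0 ≤ P := by
      by_contra hlt
      push_neg at hlt
      rcases eq_or_lt_of_le hP0 with hP | hP
      · have h := hstep 0
        nlinarith [(hxe 0).1, (hxe 1).1]
      · set y : ℝ := x 0 / P with hy
        have hy1 : 1 < y := (one_lt_div hP).2 hlt
        obtain ⟨n, hn⟩ :=
          ((tendsto_pow_atTop_atTop_of_one_lt hy1).eventually_gt_atTop (‖ω‖ / P)).exists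
        have h1 : x 0 ^ (2 ^ n) ≤ P ^ (2 ^ n - 1) * ‖ω‖ :=
          le_trans (hiter n) (mul_le_mul_of_nonneg_left (hxM n) (pow_nonneg hP0 _))
        have hPpow : P ^ (2 ^ n - 1) * P = P ^ (2 ^ n) := by
          rw [← pow_succ]
          congr 1
          have := Nat.one_le_two_pow (n := n)
          omega
        have h2 : y ^ (2 ^ n) ≤ ‖ω‖ / P := by
          rw [hy, div_pow, div_le_div_iff₀ (pow_pos hP _) hP]
          calc x 0 ^ 2 ^ n * P ≤ (P ^ (2 ^ n - 1) * ‖ω‖) * P :=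
                mul_le_mul_of_nonneg_right h1 (le_of_lt hP)
            _ = ‖ω‖ * (P ^ (2 ^ n - 1) * P) := by ring
            _ = ‖ω‖ * P ^ (2 ^ n) := by rw [hPpow]
        have h3 : y ^ n ≤ y ^ (2 ^ n) :=
          pow_le_pow_right₀ (le_of_lt hy1) (le_of_lt (Nat.lt_two_pow_self (n := n)))
        linarith
    have hcs := svm_cs ω hω b
    rw [hPre, ← hd] at hcs
    have h4 : ‖ω b‖ ^ 2 ≤ P ^ 2 := by
      rw [Complex.sq_norm]
      have : (ω d).re = x 0 := by rw [hx]; norm_num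
      nlinarith [(hxe 0).1]
    nlinarith [norm_nonneg (ω b)]
  refine ω.opNorm_le_bound hP0 ?_
  intro a
  rcases eq_or_ne a 0 with rfl | ha
  · simp
  · have hna : 0 < ‖a‖ := norm_pos_iff.2 ha
    set b : A := ((‖a‖⁻¹ : ℝ) : ℂ) • a with hb
    have hnb : ‖b‖ ≤ 1 := by
      rw [hb, norm_smul]
      simp [abs_of_nonneg (le_of_lt (inv_pos.2 hna)), inv_mul_cancel₀ (ne_of_gt hna)]
    have := hbd b hnb
    rw [hb, _root_.map_smul, smul_eq_mul, norm_mul, Complex.norm_real, Real.norm_eq_abs,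
      abs_of_nonneg (le_of_lt (inv_pos.2 hna))] at this
    calc ‖ω a‖ = ‖a‖ * (‖a‖⁻¹ * ‖ω a‖) := by
          field_simp
      _ ≤ ‖a‖ * P := mul_le_mul_of_nonneg_left this (norm_nonneg a)
      _ = P * ‖a‖ := mul_comm _ _

end Aux3

section Main
variable {A : Type*} [NormedRing A] [StarRing A] [CStarRing A]
    [NormedAlgebra ℂ A] [StarModule ℂ A] [PartialOrder A] [StarOrderedRing A]

set_option linter.unusedSectionVars false

-- polarization-based uniqueness
lemma svm_unique (I₁ I₂ : StrongDual ℂ A)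
    (h : ∀ c : A, I₁ (star c * c) = I₂ (star c * c)) : I₁ = I₂ := by
  ext a
  have hq : ∀ t : ℂ, I₁ (star ((1:A) + t • a) * ((1:A) + t • a))
      = I₂ (star ((1:A) + t • a) * ((1:A) + t • a)) := fun t => h _
  have hid : (4:ℂ) • a =
      (star ((1:A) + (1:ℂ) • a) * ((1:A) + (1:ℂ) • a))
      - (star ((1:A) + (-1:ℂ) • a) * ((1:A) + (-1:ℂ) • a))
      + Complex.I • ((star ((1:A) + (-Complex.I) • a) * ((1:A) + (-Complex.I) • a))
        - (star ((1:A) + Complex.I • a) * ((1:A) + Complex.I • a))) := by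
    have e : ∀ t : ℂ, star ((1:A) + t • a) * ((1:A) + t • a) =
        1 + t • a + star t • star a + (star t * t) • (star a * a) := by
      intro t
      simp only [star_add, star_one, star_smul, add_mul, mul_add, one_mul, mul_one,
        smul_mul_assoc, mul_smul_comm, smul_smul, smul_add]
      module
    rw [e, e, e, e]
    simp only [star_one, star_neg, Complex.star_def, Complex.conj_I, map_one]
    match_scalars <;> ring_nf <;> simp [Complex.I_sq] <;> norm_num
  have happ : ∀ (J : StrongDual ℂ A), J ((4:ℂ) • a) = (4:ℂ) * J a := by
    intro J; rw [_root_.map_smul, smul_eq_mul]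
  have h2 : (4:ℂ) * I₁ a = (4:ℂ) * I₂ a := by
    rw [← happ I₁, ← happ I₂, hid]
    simp only [map_add, map_sub, _root_.map_smul, hq]
  have h4 : (4:ℂ) ≠ 0 := by norm_num
  exact mul_left_cancel₀ h4 h2

end Main


/-- Integration of a nonnegative scalar function against a state-valued measure: for every
measurable `S` there is a unique continuous linear functional `I_S` with
`I_S(a) = ∫_S f dμ_a` on positive elements `a`; it is positive and `‖I_S‖ ≤ ∫_S f dm̂`. -/
theorem stateValuedMeasure_integral_exists
    {A : Type*} [NormedRing A] [StarRing A] [CStarRing A]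
    [NormedAlgebra ℂ A] [StarModule ℂ A] [PartialOrder A] [StarOrderedRing A]
    {X : Type*} [MeasurableSpace X]
    (m : Set X → StrongDual ℂ A)
    (hempty : m ∅ = 0)
    (hadd : ∀ S : ℕ → Set X, (∀ n, MeasurableSet (S n)) → Pairwise (Disjoint on S) →
      HasSum (fun n => m (S n)) (m (⋃ n, S n)))
    (hpos : ∀ S : Set X, MeasurableSet S → ∀ a : A, 0 ≤ a →
      ∃ r : ℝ, 0 ≤ r ∧ m S a = (r : ℂ))
    (μa : A → Measure X)
    (hμa : ∀ a : A, 0 ≤ a → ∀ S : Set X, MeasurableSet S →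
      μa a S = ENNReal.ofReal (m S a).re)
    (mhat : Measure X)
    (hmhat : ∀ S : Set X, MeasurableSet S → mhat S = ENNReal.ofReal ‖m S‖)
    (f : X → ℝ) (hfmeas : Measurable f) (hf0 : ∀ x, 0 ≤ f x)
    (hint : ∀ a : A, 0 ≤ a → ∫⁻ x, ENNReal.ofReal (f x) ∂(μa a) < ⊤) :
    ∀ S : Set X, MeasurableSet S →
      (∃! I : StrongDual ℂ A,
        ∀ a : A, 0 ≤ a → I a = ((∫ x in S, f x ∂(μa a) : ℝ) : ℂ)) ∧
      ∀ I : StrongDual ℂ A,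
        (∀ a : A, 0 ≤ a → I a = ((∫ x in S, f x ∂(μa a) : ℝ) : ℂ)) →
          (∀ a : A, 0 ≤ a → ∃ r : ℝ, 0 ≤ r ∧ I a = (r : ℂ)) ∧
            ‖I‖ ≤ ∫ x in S, f x ∂mhat := by
  intro S hS
  have h1A : (0:A) ≤ 1 := by simpa using star_mul_self_nonneg (1:A)
  -- value of m on positive elements
  have hmval : ∀ E : Set X, MeasurableSet E → ∀ a : A, 0 ≤ a →
      m E a = (((μa a E).toReal : ℝ) : ℂ) := by
    intro E hE a ha
    obtain ⟨r, hr0, hr⟩ := hpos E hE a ha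
    have hμ : μa a E = ENNReal.ofReal r := by
      rw [hμa a ha E hE, hr]; simp
    rw [hμ, ENNReal.toReal_ofReal hr0, hr]
  -- mhat agrees with μa 1
  have hmeq : mhat = μa 1 := by
    apply Measure.ext
    intro E hE
    rw [hmhat E hE, hμa 1 h1A E hE]
    congr 1
    have hle : ‖m E‖ ≤ (m E 1).re := svm_norm_le (m E) (hpos E hE)
    have hge : (m E 1).re ≤ ‖m E‖ := by
      have h1 : ‖(1:A)‖ ≤ 1 := by
        rcases subsingleton_or_nontrivial A with h | h
        · rw [Subsingleton.elim (1:A) 0, norm_zero]; norm_num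
        · exact le_of_eq CStarRing.norm_one
      calc (m E 1).re ≤ ‖m E 1‖ := Complex.re_le_norm _
        _ ≤ ‖m E‖ * ‖(1:A)‖ := (m E).le_opNorm 1
        _ ≤ ‖m E‖ * 1 := mul_le_mul_of_nonneg_left h1 (norm_nonneg _)
        _ = ‖m E‖ := mul_one _
    linarith
  -- simple function approximation
  set g : X → ENNReal := fun x => ENNReal.ofReal (f x) with hgdef
  have hg : Measurable g := hfmeas.ennreal_ofReal
  set φ : ℕ → SimpleFunc X ENNReal := fun n => SimpleFunc.eapprox g n with hφdef
  set In : ℕ → StrongDual ℂ A :=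
    fun n => ∑ c ∈ (φ n).range, (c.toReal : ℂ) • m (S ∩ (φ n) ⁻¹' {c}) with hIndef
  have hEmeas : ∀ (n : ℕ) (c : ENNReal), MeasurableSet (S ∩ (φ n) ⁻¹' {c}) :=
    fun n c => hS.inter (SimpleFunc.measurableSet_fiber _ _)
  have hμfin : ∀ a : A, 0 ≤ a → ∀ E : Set X, MeasurableSet E → μa a E ≠ ⊤ := by
    intro a ha E hE
    rw [hμa a ha E hE]
    exact ENNReal.ofReal_ne_top
  have hfinc : ∀ (n : ℕ) (c : ENNReal), c ∈ (φ n).range → c ≠ ⊤ := by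
    intro n c hc
    rw [SimpleFunc.mem_range] at hc
    obtain ⟨x, rfl⟩ := hc
    exact (SimpleFunc.eapprox_lt_top g n x).ne
  -- evaluation of In on positive elements
  have hval : ∀ (n : ℕ) (a : A), 0 ≤ a →
      In n a = ((((φ n).lintegral ((μa a).restrict S)).toReal : ℝ) : ℂ) := by
    intro n a ha
    have h1 : In n a = ∑ c ∈ (φ n).range, (c.toReal : ℂ) * m (S ∩ (φ n) ⁻¹' {c}) a := by
      rw [hIndef]
      simp [ContinuousLinearMap.sum_apply, ContinuousLinearMap.smul_apply, smul_eq_mul]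
    have h2 : ∀ c ∈ (φ n).range, (c.toReal : ℂ) * m (S ∩ (φ n) ⁻¹' {c}) a =
        (((c * ((μa a).restrict S) ((φ n) ⁻¹' {c})).toReal : ℝ) : ℂ) := by
      intro c hc
      rw [hmval _ (hEmeas n c) a ha,
        Measure.restrict_apply (SimpleFunc.measurableSet_fiber _ _), Set.inter_comm,
        ENNReal.toReal_mul]
      push_cast
      ring
    rw [h1, Finset.sum_congr rfl h2, ← Complex.ofReal_sum]
    congr 1
    rw [SimpleFunc.lintegral, ENNReal.toReal_sum]
    intro c hc
    apply ENNReal.mul_ne_top (hfinc n c hc)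
    rw [Measure.restrict_apply (SimpleFunc.measurableSet_fiber _ _)]
    exact hμfin a ha _ ((SimpleFunc.measurableSet_fiber _ _).inter hS)
  -- lintegral facts
  have hLfin : ∀ a : A, 0 ≤ a → ∫⁻ x in S, g x ∂(μa a) ≠ ⊤ := by
    intro a ha
    refine ne_of_lt (lt_of_le_of_lt ?_ (hint a ha))
    exact lintegral_mono' Measure.restrict_le_self le_rfl
  have hsup : ∀ a : A, 0 ≤ a →
      (⨆ n, (φ n).lintegral ((μa a).restrict S)) = ∫⁻ x in S, g x ∂(μa a) := by
    intro a ha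
    exact (lintegral_eq_iSup_eapprox_lintegral hg).symm
  have hmonoL : ∀ (ν : Measure X), Monotone (fun n => (φ n).lintegral ν) :=
    fun ν i j h => SimpleFunc.lintegral_mono (SimpleFunc.monotone_eapprox g h) le_rfl
  have hLle : ∀ (a : A) (ha : 0 ≤ a) (n : ℕ),
      (φ n).lintegral ((μa a).restrict S) ≠ ⊤ := by
    intro a ha n
    refine ne_top_of_le_ne_top (hLfin a ha) ?_
    rw [← hsup a ha]
    exact le_iSup (fun k => (φ k).lintegral ((μa a).restrict S)) n
  have htmono : ∀ (a : A) (ha : 0 ≤ a), Monotone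
      (fun n => ((φ n).lintegral ((μa a).restrict S)).toReal) := by
    intro a ha i j h
    exact ENNReal.toReal_mono (hLle a ha j) (hmonoL _ h)
  have htendsto : ∀ (a : A) (ha : 0 ≤ a), Filter.Tendsto
      (fun n => ((φ n).lintegral ((μa a).restrict S)).toReal) Filter.atTop
      (nhds ((∫⁻ x in S, g x ∂(μa a)).toReal)) := by
    intro a ha
    have h1 : Filter.Tendsto (fun n => (φ n).lintegral ((μa a).restrict S)) Filter.atTop
        (nhds (⨆ n, (φ n).lintegral ((μa a).restrict S))) := tendsto_atTop_iSup (hmonoL _)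
    rw [hsup a ha] at h1
    exact (ENNReal.tendsto_toReal (hLfin a ha)).comp h1
  -- Cauchy sequence
  have hdiffpos : ∀ (k n : ℕ), k ≤ n → ∀ a : A, 0 ≤ a →
      ∃ r : ℝ, 0 ≤ r ∧ (In n - In k) a = (r : ℂ) := by
    intro k n hkn a ha
    refine ⟨((φ n).lintegral ((μa a).restrict S)).toReal
      - ((φ k).lintegral ((μa a).restrict S)).toReal, ?_, ?_⟩
    · exact sub_nonneg.2 (htmono a ha hkn)
    · rw [ContinuousLinearMap.sub_apply, hval n a ha, hval k a ha]
      push_cast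
      ring
  have hnormdiff : ∀ (k n : ℕ), k ≤ n → ‖In n - In k‖ ≤
      ((φ n).lintegral ((μa 1).restrict S)).toReal
      - ((φ k).lintegral ((μa 1).restrict S)).toReal := by
    intro k n hkn
    have h1 := svm_norm_le (In n - In k) (hdiffpos k n hkn)
    obtain ⟨r, hr0, hre⟩ := hdiffpos k n hkn 1 h1A
    have h2 : ((In n - In k) 1).re =
        ((φ n).lintegral ((μa 1).restrict S)).toReal
        - ((φ k).lintegral ((μa 1).restrict S)).toReal := by
      rw [ContinuousLinearMap.sub_apply, hval n 1 h1A, hval k 1 h1A]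
      simp
    rw [h2] at h1
    exact h1
  have hcauchy : CauchySeq In := by
    have ht : CauchySeq (fun n => ((φ n).lintegral ((μa 1).restrict S)).toReal) :=
      (htendsto 1 h1A).cauchySeq
    rw [Metric.cauchySeq_iff] at ht ⊢
    intro ε hε
    obtain ⟨N, hN⟩ := ht ε hε
    refine ⟨N, fun p hp q hq => ?_⟩
    have hdle : dist (In p) (In q) ≤
        dist (((φ p).lintegral ((μa 1).restrict S)).toReal)
          (((φ q).lintegral ((μa 1).restrict S)).toReal) := by
      rcases le_total q p with h | h
      · rw [dist_eq_norm, Real.dist_eq]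
        refine le_trans (hnormdiff q p h) ?_
        exact le_abs_self _
      · rw [dist_comm, dist_eq_norm, Real.dist_eq, abs_sub_comm]
        refine le_trans (hnormdiff p q h) ?_
        exact le_abs_self _
    exact lt_of_le_of_lt hdle (hN p hp q hq)
  obtain ⟨I, hItend⟩ := cauchySeq_tendsto_of_complete hcauchy
  -- value of I on positive elements
  have hB : ∀ a : A, 0 ≤ a →
      (∫ x in S, f x ∂(μa a)) = (∫⁻ x in S, g x ∂(μa a)).toReal := by
    intro a ha
    exact integral_eq_lintegral_of_nonneg_ae (Filter.Eventually.of_forall hf0)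
      hfmeas.aestronglyMeasurable
  have hIprop : ∀ a : A, 0 ≤ a → I a = ((∫ x in S, f x ∂(μa a) : ℝ) : ℂ) := by
    intro a ha
    have h1 : Filter.Tendsto (fun n => In n a) Filter.atTop (nhds (I a)) := by
      have hcont : Continuous (fun J : StrongDual ℂ A => J a) := by
        exact (ContinuousLinearMap.apply ℂ ℂ a).continuous
      exact (hcont.tendsto I).comp hItend
    have h2 : Filter.Tendsto (fun n => In n a) Filter.atTop
        (nhds (((∫⁻ x in S, g x ∂(μa a)).toReal : ℝ) : ℂ)) := by
      have h3 := (Complex.continuous_ofReal.tendsto _).comp (htendsto a ha)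
      have h4 : (fun n => In n a) =
          fun n => ((((φ n).lintegral ((μa a).restrict S)).toReal : ℝ) : ℂ) := by
        funext n
        exact hval n a ha
      rw [h4]
      exact h3
    rw [hB a ha]
    exact tendsto_nhds_unique h1 h2
  -- positivity of any functional with the defining property
  have hpositivity : ∀ J : StrongDual ℂ A,
      (∀ a : A, 0 ≤ a → J a = ((∫ x in S, f x ∂(μa a) : ℝ) : ℂ)) →
      ∀ a : A, 0 ≤ a → ∃ r : ℝ, 0 ≤ r ∧ J a = (r : ℂ) := by
    intro J hJ a ha
    exact ⟨∫ x in S, f x ∂(μa a), integral_nonneg hf0, hJ a ha⟩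
  -- uniqueness
  have huniq : ∀ J₁ J₂ : StrongDual ℂ A,
      (∀ a : A, 0 ≤ a → J₁ a = ((∫ x in S, f x ∂(μa a) : ℝ) : ℂ)) →
      (∀ a : A, 0 ≤ a → J₂ a = ((∫ x in S, f x ∂(μa a) : ℝ) : ℂ)) → J₁ = J₂ := by
    intro J₁ J₂ h₁ h₂
    apply svm_unique
    intro c
    rw [h₁ _ (star_mul_self_nonneg c), h₂ _ (star_mul_self_nonneg c)]
  constructor
  · exact ⟨I, hIprop, fun J hJ => huniq J I hJ hIprop⟩
  · intro J hJ
    refine ⟨hpositivity J hJ, ?_⟩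
    have h1 : ‖J‖ ≤ (J 1).re := svm_norm_le J (hpositivity J hJ)
    have h2 : (J 1).re = ∫ x in S, f x ∂(μa 1) := by
      rw [hJ 1 h1A]
      exact Complex.ofReal_re _
    rw [hmeq]
    rw [h2] at h1
    exact h1
end
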